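/- Let R be a PVMD, I a t-ideal of R, and P a minimal prime ideal over I in R. If there is a finitely generated ideal J of R such that I ⊆ J ⊆ P, then I⁻¹ is not a subring of the quotient field K. -/

import Mathlib

/-!
Common definitions: star operations (`v`- and `t`-closure), `t`-ideals, `t`-invertibility,
PVMDs, overrings, `t`-linked and `t`-flat overrings, localizations inside the quotient
field, Nagata and Kaplansky transforms, endomorphism rings of ideals.
-/

open scoped Classical

namespace PVMDPaper

noncomputable section

section Generic

variable (A : Type*) [CommRing A] (K : Type*) [Field K] [Algebra A K]

/-- The image of an integral ideal of `A` inside the field `K`, as an `A`-submodule of `K`. -/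
def toK (I : Ideal A) : Submodule A K := Submodule.map (Algebra.linearMap A K) I

variable {A K}

/-- The dual `I⁻¹ = (A : I) = {x ∈ K : x I ⊆ A}` of a submodule of `K`. -/
def dual (I : Submodule A K) : Submodule A K := 1 / I

/-- The `v`-closure `I_v = (I⁻¹)⁻¹`. -/
def vOp (I : Submodule A K) : Submodule A K := 1 / (1 / I)

/-- The `t`-closure `I_t`: the union of `J_v` where `J` ranges over the nonzero finitely
generated submodules `J ≤ I` (the union of this directed family is its supremum). -/
def tOp (I : Submodule A K) : Submodule A K :=
  sSup {V | ∃ J : Submodule A K, J ≠ ⊥ ∧ J.FG ∧ J ≤ I ∧ V = vOp J}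

variable (K)

/-- An (integral) ideal `I` of `A` is a `t`-ideal if `I = I_t`. -/
def IsTIdeal (I : Ideal A) : Prop := tOp (toK A K I) = toK A K I

/-- An ideal `I` is `t`-invertible if `(I I⁻¹)_t = A`. -/
def IsTInvertible (I : Ideal A) : Prop := tOp (toK A K I * dual (toK A K I)) = 1

/-- A `t`-maximal ideal: an ideal maximal in the set of proper integral `t`-ideals. -/
def IsTMaximal (M : Ideal A) : Prop :=
  M ≠ ⊤ ∧ IsTIdeal K M ∧ ∀ J : Ideal A, J ≠ ⊤ → IsTIdeal K J → M ≤ J → J = M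

variable (A)

/-- `A` is a Prüfer `v`-multiplication domain: every nonzero finitely generated ideal
is `t`-invertible. -/
def IsPVMD : Prop := ∀ I : Ideal A, I ≠ ⊥ → I.FG → IsTInvertible K I

/-- `Spec_t(A)` is Noetherian: the ascending chain condition on radical `t`-ideals. -/
def TSpecNoetherian : Prop :=
  ∀ f : ℕ →o Ideal A, (∀ n, IsTIdeal K (f n) ∧ (f n).radical = f n) →
    ∃ n, ∀ m, n ≤ m → f m = f n

variable {A K}

/-- A submodule of `K` is a subring of `K` iff it contains `1` and is closed under
multiplication (being an additive subgroup already). -/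
def IsSubringOf (S : Submodule A K) : Prop :=
  (1 : K) ∈ S ∧ ∀ x ∈ S, ∀ y ∈ S, x * y ∈ S

variable (K)

/-- The localization `A_P = {a/s : a ∈ A, s ∈ A ∖ P}` viewed as a subset of `K`. -/
def loc (P : Ideal A) : Set K :=
  {x | ∃ a s : A, s ∉ P ∧ x * algebraMap A K s = algebraMap A K a}

/-- The set `J A_P = {a/s : a ∈ J, s ∈ A ∖ P} ⊆ K`. -/
def locIdealAt (J P : Ideal A) : Set K :=
  {x | ∃ a ∈ J, ∃ s : A, s ∉ P ∧ x * algebraMap A K s = algebraMap A K a}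

/-- `Z(A, I)`: the set of zero divisors on `A/I`. -/
def ZSet (I : Ideal A) : Set A := {x | ∃ a : A, a ∉ I ∧ x * a ∈ I}

/-- `Q` is a maximal prime ideal of `Z(A,I)`: a prime contained in `Z(A,I)`, maximal
(under inclusion) among the primes contained in `Z(A,I)`. -/
def MaxPrimeOfZ (I Q : Ideal A) : Prop :=
  Q.IsPrime ∧ (Q : Set A) ⊆ ZSet I ∧
    ∀ Q' : Ideal A, Q'.IsPrime → (Q' : Set A) ⊆ ZSet I → Q ≤ Q' → Q' = Q

end Generic

section Overring

variable {R : Type*} [CommRing R] [IsDomain R]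
variable {K : Type*} [Field K] [Algebra R K] [IsFractionRing R K]

/-- The extension `IT` of an ideal `I` of `R` to an overring `T`, as a `T`-submodule of `K`. -/
def extendI (I : Ideal R) (T : Subalgebra R K) : Submodule T K :=
  Submodule.span T (algebraMap R K '' (I : Set R))

/-- The extension `IT` of an `R`-submodule `I` of `K` to an overring `T`. -/
def extendS (I : Submodule R K) (T : Subalgebra R K) : Submodule T K :=
  Submodule.span T (I : Set K)

/-- An overring `T` of `R` is `t`-linked over `R` if `(IT)⁻¹ = T` for each finitely
generated ideal `I` of `R` with `I⁻¹ = R`. -/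
def IsTLinked (T : Subalgebra R K) : Prop :=
  ∀ I : Ideal R, I.FG → dual (toK R K I) = 1 → dual (extendI I T) = 1

/-- An overring `T` of `R` is `t`-flat over `R` if `T_M = R_{M ∩ R}` for each
`t`-maximal ideal `M` of `T`. -/
def IsTFlat (T : Subalgebra R K) : Prop :=
  ∀ M : Ideal T, IsTMaximal K M → loc K M = loc K (M.comap (algebraMap R T))

variable (R K)

/-- `R` is a `tQR`-domain: a PVMD all of whose `t`-linked overrings are localizations
of `R` at multiplicative sets. -/
def IsTQR : Prop :=
  IsPVMD R K ∧ ∀ T : Subalgebra R K, IsTLinked T → ∃ S : Submonoid R,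
    (T : Set K) = {x | ∃ a : R, ∃ s ∈ S, x * algebraMap R K s = algebraMap R K a}

variable {R K}
variable (K)

/-- The endomorphism ring `(I : I) = {x ∈ K : x I ⊆ I}` of an ideal `I`, as an
overring of `R`. -/
def endoRing (I : Ideal R) : Subalgebra R K where
  carrier := {x : K | ∀ y ∈ toK R K I, x * y ∈ toK R K I}
  mul_mem' := by
    intro a b ha hb y hy
    rw [mul_assoc]
    exact ha _ (hb _ hy)
  one_mem' := by
    intro y hy
    rwa [one_mul]
  add_mem' := by
    intro a b ha hb y hy
    rw [add_mul]
    exact Submodule.add_mem _ (ha y hy) (hb y hy)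
  zero_mem' := by
    intro y hy
    rw [zero_mul]
    exact Submodule.zero_mem _
  algebraMap_mem' := by
    intro r y hy
    rw [← Algebra.smul_def]
    exact Submodule.smul_mem _ r hy

set_option synthInstance.maxHeartbeats 400000 in
/-- The ideal `I`, viewed as an ideal of its endomorphism ring `(I : I)`. -/
def idealInEndo (I : Ideal R) : Ideal (endoRing K I) where
  carrier := {x | (x : K) ∈ toK R K I}
  add_mem' := by
    intro a b ha hb
    simp only [Set.mem_setOf_eq] at *
    rw [AddMemClass.coe_add]
    exact Submodule.add_mem _ ha hb
  zero_mem' := by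
    simp only [Set.mem_setOf_eq, ZeroMemClass.coe_zero]
    exact Submodule.zero_mem _
  smul_mem' := by
    intro c x hx
    simp only [Set.mem_setOf_eq] at *
    rw [smul_eq_mul, MulMemClass.coe_mul]
    exact c.2 _ hx

/-- The Kaplansky transform `Ω(I) = {u ∈ K : ∀ a ∈ I, ∃ n ≥ 1, u aⁿ ∈ R}`, as an
overring of `R`. -/
def kaplansky (I : Ideal R) : Subalgebra R K where
  carrier := {u : K | ∀ a ∈ I, ∃ n : ℕ, 0 < n ∧
    ∃ r : R, u * (algebraMap R K a) ^ n = algebraMap R K r}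
  mul_mem' := by
    intro u v hu hv a ha
    obtain ⟨n, hn, r, hr⟩ := hu a ha
    obtain ⟨m, hm, s, hs⟩ := hv a ha
    refine ⟨n + m, by omega, r * s, ?_⟩
    rw [map_mul, ← hr, ← hs, pow_add]
    ring
  one_mem' := by
    intro a ha
    exact ⟨1, one_pos, a, by rw [pow_one, one_mul]⟩
  add_mem' := by
    intro u v hu hv a ha
    obtain ⟨n, hn, r, hr⟩ := hu a ha
    obtain ⟨m, hm, s, hs⟩ := hv a ha
    refine ⟨n + m, by omega, r * a ^ m + s * a ^ n, ?_⟩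
    rw [map_add, map_mul, map_mul, map_pow, map_pow, ← hr, ← hs, pow_add, add_mul]
    ring
  zero_mem' := by
    intro a ha
    exact ⟨1, one_pos, 0, by rw [map_zero, zero_mul]⟩
  algebraMap_mem' := by
    intro r a ha
    exact ⟨1, one_pos, r * a, by rw [map_mul, pow_one]⟩

/-- The Nagata (ideal) transform `T(I) = ⋃_{n ≥ 1} (R : Iⁿ)`, as an overring of `R`. -/
def nagata (I : Ideal R) : Subalgebra R K where
  carrier := {x : K | ∃ n : ℕ, ∀ y ∈ I ^ (n + 1),
    ∃ r : R, x * algebraMap R K y = algebraMap R K r}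
  mul_mem' := by
    intro x x' hx hx'
    obtain ⟨n, hn⟩ := hx
    obtain ⟨m, hm⟩ := hx'
    refine ⟨n + m + 1, fun y hy => ?_⟩
    rw [show n + m + 1 + 1 = (n + 1) + (m + 1) by omega, pow_add] at hy
    refine Submodule.mul_induction_on hy ?_ ?_
    · intro a ha b hb
      obtain ⟨r, hr⟩ := hn a ha
      obtain ⟨s, hs⟩ := hm b hb
      refine ⟨r * s, ?_⟩
      rw [map_mul, map_mul, ← hr, ← hs]
      ring
    · rintro y1 y2 ⟨r1, h1⟩ ⟨r2, h2⟩
      exact ⟨r1 + r2, by rw [map_add, map_add, mul_add, h1, h2]⟩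
  one_mem' := ⟨0, fun y _ => ⟨y, by rw [one_mul]⟩⟩
  add_mem' := by
    intro x x' hx hx'
    obtain ⟨n, hn⟩ := hx
    obtain ⟨m, hm⟩ := hx'
    refine ⟨n + m + 1, fun y hy => ?_⟩
    have h1 : y ∈ I ^ (n + 1) := Ideal.pow_le_pow_right (by omega) hy
    have h2 : y ∈ I ^ (m + 1) := Ideal.pow_le_pow_right (by omega) hy
    obtain ⟨r, hr⟩ := hn y h1
    obtain ⟨s, hs⟩ := hm y h2
    exact ⟨r + s, by rw [map_add, add_mul, hr, hs]⟩
  zero_mem' := ⟨0, fun y _ => ⟨0, by rw [map_zero, zero_mul]⟩⟩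
  algebraMap_mem' := by
    intro r
    exact ⟨0, fun y _ => ⟨r * y, by rw [map_mul]⟩⟩

end Overring

section Statements

variable {R : Type*} [CommRing R] [IsDomain R]
variable {K : Type*} [Field K] [Algebra R K] [IsFractionRing R K]

section Aux

variable {R : Type*} [CommRing R] [IsDomain R]
variable {K : Type*} [Field K] [Algebra R K] [IsFractionRing R K]

lemma mem_toK {I : Ideal R} {x : K} :
    x ∈ toK R K I ↔ ∃ i ∈ I, algebraMap R K i = x := by
  simp [toK, Submodule.mem_map, Algebra.linearMap_apply]

lemma toK_le_one (I : Ideal R) : toK R K I ≤ 1 := by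
  intro x hx
  obtain ⟨i, _, rfl⟩ := mem_toK.1 hx
  exact Submodule.mem_one.2 ⟨i, rfl⟩

lemma toK_mono {I J : Ideal R} (h : I ≤ J) : toK R K I ≤ toK R K J :=
  Submodule.map_mono h

lemma toK_mul (I J : Ideal R) :
    toK R K (I * J) = toK R K I * toK R K J := by
  have : Algebra.linearMap R K = (Algebra.ofId R K).toLinearMap := rfl
  rw [toK, toK, toK, this]
  exact Submodule.map_mul I J (Algebra.ofId R K)

lemma toK_span_singleton (t : R) :
    toK R K (Ideal.span {t}) = Submodule.span R {algebraMap R K t} := by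
  rw [toK, Ideal.span, Submodule.map_span, Set.image_singleton]
  rfl

lemma vOp_mono {A B : Submodule R K} (h : A ≤ B) : vOp A ≤ vOp B := by
  rw [vOp, vOp]
  intro x hx
  rw [Submodule.mem_div_iff_forall_mul_mem] at hx ⊢
  intro y hy
  exact hx y (fun z hz => hy z (h hz))

lemma pow_mono_submodule {A B : Submodule R K} (h : A ≤ B) : ∀ n, A ^ n ≤ B ^ n := by
  intro n
  induction n with
  | zero => simp
  | succ n ih => rw [pow_succ, pow_succ]; exact mul_le_mul' ih h

lemma one_div_pow_le_one {G : Submodule R K} (hG : (1 : Submodule R K) / G ≤ 1) :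
    ∀ k, (1 : Submodule R K) / G ^ (k + 1) ≤ 1 := by
  intro k
  induction k with
  | zero => simpa using hG
  | succ k ih =>
    intro x hx
    refine ih ?_
    rw [Submodule.mem_div_iff_forall_mul_mem] at hx ⊢
    intro y hy
    have : x * y ∈ (1 : Submodule R K) / G := by
      rw [Submodule.mem_div_iff_forall_mul_mem]
      intro g hg
      have : y * g ∈ G ^ (k + 1 + 1) := by
        rw [pow_succ]
        exact Submodule.mul_mem_mul hy hg
      simpa [mul_assoc] using hx _ this
    exact hG this

lemma exists_pow_mem_aux (I P : Ideal R) (hP : P ∈ I.minimalPrimes) {j : R} (hj : j ∈ P) :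
    ∃ (n : ℕ) (t : R), t ∉ P ∧ t * j ^ n ∈ I := by
  by_contra hcon
  push_neg at hcon
  have hPprime : P.IsPrime := hP.1.1
  have hone : (1 : R) ∉ P := fun h => hPprime.ne_top ((Ideal.eq_top_iff_one P).2 h)
  set S : Submonoid R :=
    { carrier := {r | ∃ t ∉ P, ∃ n : ℕ, r = t * j ^ n}
      one_mem' := ⟨1, hone, 0, by ring⟩
      mul_mem' := by
        rintro a b ⟨t, ht, n, rfl⟩ ⟨u, hu, m, rfl⟩
        refine ⟨t * u, fun h => ?_, n + m, by ring⟩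
        rcases hPprime.mem_or_mem h with h | h
        exacts [ht h, hu h] } with hSdef
  have hdisj : Disjoint (I : Set R) (S : Set R) := by
    rw [Set.disjoint_left]
    rintro r hrI ⟨t, ht, n, rfl⟩
    exact hcon n t ht hrI
  obtain ⟨p, hp, hIp, hdisj'⟩ := Ideal.exists_le_prime_disjoint I S hdisj
  have hpP : p ≤ P := by
    intro r hr
    by_contra hrP
    exact Set.disjoint_left.1 hdisj' hr ⟨r, hrP, 0, by ring⟩
  have hPp : P ≤ p := hP.2 ⟨hp, hIp⟩ hpP
  exact Set.disjoint_left.1 hdisj' (hPp hj) ⟨1, hone, 1, by ring⟩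

lemma exists_annihilating_power (I P : Ideal R) (hP : P ∈ I.minimalPrimes) (s : Finset R)
    (hs : ∀ j ∈ s, j ∈ P) :
    ∃ (N : ℕ) (t : R), 0 < N ∧ t ∉ P ∧ ∀ x ∈ Ideal.span (s : Set R) ^ N, t * x ∈ I := by
  classical
  have hPprime : P.IsPrime := hP.1.1
  have hone : (1 : R) ∉ P := fun h => hPprime.ne_top ((Ideal.eq_top_iff_one P).2 h)
  induction s using Finset.induction_on with
  | empty =>
    refine ⟨1, 1, one_pos, hone, fun x hx => ?_⟩
    simp only [Finset.coe_empty, Ideal.span_empty, pow_one, Ideal.mem_bot] at hx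
    simp [hx]
  | insert j s' hjs ih =>
    obtain ⟨N, t, hN, ht, hsub⟩ := ih (fun j hj => hs j (Finset.mem_insert_of_mem hj))
    obtain ⟨n, u, hu, hun⟩ := exists_pow_mem_aux I P hP (hs j (Finset.mem_insert_self j s'))
    refine ⟨n + N, u * t, by omega, fun h => ?_, fun x hx => ?_⟩
    · rcases hPprime.mem_or_mem h with h | h
      exacts [hu h, ht h]
    · have hspan : Ideal.span (↑(insert j s') : Set R) =
          Ideal.span {j} ⊔ Ideal.span (s' : Set R) := by
        rw [Finset.coe_insert, Ideal.span_insert]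
      have hx' : x ∈ Ideal.span {j} ^ n ⊔ Ideal.span (s' : Set R) ^ N :=
        Ideal.sup_pow_add_le_pow_sup_pow (hspan ▸ hx)
      obtain ⟨y, hy, z, hz, rfl⟩ := Submodule.mem_sup.1 hx'
      rw [Ideal.span_singleton_pow, Ideal.mem_span_singleton'] at hy
      obtain ⟨c, rfl⟩ := hy
      have h1 : u * t * (c * j ^ n) = t * c * (u * j ^ n) := by ring
      have h2 : u * t * z = u * (t * z) := by ring
      rw [mul_add, h1, h2]
      exact I.add_mem (I.mul_mem_left _ hun) (I.mul_mem_left _ (hsub z hz))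

lemma exists_good_fg (X : Submodule R K) (hX : tOp X = 1) {x0 : K} (hx0 : x0 ∈ X)
    (hx0ne : x0 ≠ 0) :
    ∃ G : Submodule R K, G ≠ ⊥ ∧ G.FG ∧ G ≤ X ∧ (1 : Submodule R K) / G ≤ 1 := by
  have h1 : (1 : K) ∈ tOp X := by
    rw [hX]; exact Submodule.mem_one.2 ⟨1, map_one _⟩
  rw [tOp, Submodule.mem_sSup_iff_exists_finset] at h1
  obtain ⟨s, hsS, hmem⟩ := h1
  set f : Submodule R K → Submodule R K := fun V =>
    if h : ∃ Jm : Submodule R K, Jm ≠ ⊥ ∧ Jm.FG ∧ Jm ≤ X ∧ V = vOp Jm then h.choose else ⊥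
    with hf
  have hfprop : ∀ V ∈ s, (f V).FG ∧ f V ≤ X ∧ V = vOp (f V) := by
    intro V hV
    have h : ∃ Jm : Submodule R K, Jm ≠ ⊥ ∧ Jm.FG ∧ Jm ≤ X ∧ V = vOp Jm := hsS hV
    rw [hf]
    simp only [dif_pos h]
    exact ⟨h.choose_spec.2.1, h.choose_spec.2.2.1, h.choose_spec.2.2.2⟩
  refine ⟨Submodule.span R {x0} ⊔ s.sup f, ?_, ?_, ?_, ?_⟩
  · rw [Submodule.ne_bot_iff]
    exact ⟨x0, Submodule.mem_sup_left (Submodule.mem_span_singleton_self x0), hx0ne⟩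
  · exact Submodule.FG.sup (Submodule.fg_span_singleton x0)
      (Submodule.fg_finset_sup s f (fun V hV => (hfprop V hV).1))
  · refine sup_le ?_ (Finset.sup_le fun V hV => (hfprop V hV).2.1)
    rw [Submodule.span_le, Set.singleton_subset_iff]
    exact hx0
  · have hv : (1 : K) ∈ vOp (Submodule.span R {x0} ⊔ s.sup f) := by
      have hle : (⨆ V ∈ s, V) ≤ vOp (Submodule.span R {x0} ⊔ s.sup f) := by
        refine iSup_le fun V => iSup_le fun hV => ?_
        rw [(hfprop V hV).2.2]
        exact vOp_mono (le_trans (Finset.le_sup hV) le_sup_right)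
      exact hle hmem
    intro y hy
    rw [vOp, Submodule.mem_div_iff_forall_mul_mem] at hv
    simpa using hv y hy

lemma toK_pow (J : Ideal R) (n : ℕ) : toK R K (J ^ n) = toK R K J ^ n := by
  induction n with
  | zero =>
    simp only [pow_zero]
    rw [Ideal.one_eq_top, toK, Submodule.map_top, Submodule.one_eq_range]
  | succ n ih => rw [pow_succ, pow_succ, toK_mul, ih]

lemma one_div_antitone {A B : Submodule R K} (h : A ≤ B) :
    (1 : Submodule R K) / B ≤ 1 / A := by
  intro x hx
  rw [Submodule.mem_div_iff_forall_mul_mem] at hx ⊢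
  exact fun y hy => hx y (h hy)

lemma pow_succ_le_self {D : Submodule R K} (hDD : D * D ≤ D) (k : ℕ) :
    D ^ (k + 1) ≤ D := by
  induction k with
  | zero => simp
  | succ k ih =>
    rw [pow_succ]
    exact le_trans (mul_le_mul' ih le_rfl) hDD

end Aux

/-- Let `R` be a PVMD, `I` a `t`-ideal of `R`, and `P` a minimal prime
of `I`. If there is a finitely generated ideal `J` with `I ⊆ J ⊆ P`, then `I⁻¹` is not
a subring of `K`. -/
theorem statement_7 (hR : IsPVMD R K) (I : Ideal R) (hbot : I ≠ ⊥) (htI : IsTIdeal K I)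
    (P : Ideal R) (hP : P ∈ I.minimalPrimes)
    (J : Ideal R) (hJ : J.FG) (hIJ : I ≤ J) (hJP : J ≤ P) :
    ¬ IsSubringOf (dual (toK R K I)) := by
  intro hring
  obtain ⟨hone, hmulcl⟩ := hring
  have hinj : Function.Injective (algebraMap R K) := IsFractionRing.injective R K
  have hPprime : P.IsPrime := hP.1.1
  set IK := toK R K I with hIKdef
  set JK := toK R K J with hJKdef
  have hDD : (1 / IK : Submodule R K) * (1 / IK) ≤ 1 / IK :=
    Submodule.mul_le.2 fun x hx y hy => hmulcl x hx y hy
  have hJbot : J ≠ ⊥ := fun h => hbot (le_bot_iff.1 (h ▸ hIJ))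
  have hinv := hR J hJbot hJ
  obtain ⟨a₀, ha₀I, ha₀⟩ := (Submodule.ne_bot_iff I).1 hbot
  have h1JK : (1 : K) ∈ (1 : Submodule R K) / JK :=
    Submodule.mem_div_iff_forall_mul_mem.2 fun y hy => by simpa using toK_le_one J hy
  have hx0mem : algebraMap R K a₀ ∈ JK * dual JK := by
    have h := Submodule.mul_mem_mul (mem_toK.2 ⟨a₀, hIJ ha₀I, rfl⟩) h1JK
    rw [mul_one] at h
    exact h
  have hx0ne : algebraMap R K a₀ ≠ 0 := fun h => ha₀ ((map_eq_zero_iff _ hinj).1 h)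
  obtain ⟨G, hGbot, hGfg, hGle, hGdiv⟩ := exists_good_fg _ hinv hx0mem hx0ne
  have hGpow : ∀ k, (1 : Submodule R K) / G ^ (k + 1) ≤ 1 := one_div_pow_le_one hGdiv
  obtain ⟨sJ, hsJ⟩ := id hJ
  obtain ⟨N, t, hNpos, htP, htpow⟩ := exists_annihilating_power I P hP sJ
    (fun j hj => hJP (hsJ ▸ Ideal.subset_span hj))
  rw [hsJ] at htpow
  set F : Ideal R := Ideal.span {t} * J ^ N with hFdef
  have hFI : F ≤ I := by
    refine Submodule.mul_le.2 fun r hr x hx => ?_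
    obtain ⟨c, rfl⟩ := Ideal.mem_span_singleton'.1 hr
    rw [mul_assoc]
    exact I.mul_mem_left c (htpow x hx)
  have hFfg : F.FG := Submodule.FG.mul (Submodule.fg_span_singleton t) (Submodule.FG.pow hJ N)
  have ht0 : t ≠ 0 := fun h => htP (h ▸ P.zero_mem)
  obtain ⟨j₀, hj₀J, hj₀⟩ := (Submodule.ne_bot_iff J).1 hJbot
  have hFmem : t * j₀ ^ N ∈ F :=
    Submodule.mul_mem_mul (Ideal.mem_span_singleton_self t) (Ideal.pow_mem_pow hj₀J N)
  have hFmemne : t * j₀ ^ N ≠ 0 := mul_ne_zero ht0 (pow_ne_zero N hj₀)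
  have htoKF : toK R K F = Submodule.span R {algebraMap R K t} * JK ^ N := by
    rw [hFdef, toK_mul, toK_span_singleton, toK_pow, hJKdef]
  have hFle : toK R K F ≤ IK := toK_mono hFI
  have hJIdiv : (1 : Submodule R K) / JK ≤ 1 / IK := one_div_antitone (toK_mono hIJ)
  -- the key membership
  have hkey : algebraMap R K (t * t) ∈ vOp (toK R K F) := by
    rw [vOp, Submodule.mem_div_iff_forall_mul_mem]
    intro x hx
    have hx1 : ∀ y ∈ toK R K F, x * y ∈ (1 : Submodule R K) :=
      Submodule.mem_div_iff_forall_mul_mem.1 hx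
    have hA : Submodule.span R {x} * (Submodule.span R {algebraMap R K t} * JK ^ N) ≤ 1 := by
      rw [← htoKF]
      refine Submodule.mul_le.2 fun u hu y hy => ?_
      obtain ⟨c, rfl⟩ := Submodule.mem_span_singleton.1 hu
      rw [smul_mul_assoc]
      exact Submodule.smul_mem _ c (hx1 y hy)
    have hB : (Submodule.span R {algebraMap R K t} * JK ^ N) *
        ((1 : Submodule R K) / JK) ^ (N + N) ≤ 1 := by
      have h1 : Submodule.span R {algebraMap R K t} * JK ^ N ≤ IK := htoKF ▸ hFle
      obtain ⟨M, hM⟩ : ∃ M, N + N = M + 1 := ⟨N + N - 1, by omega⟩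
      have h2 : ((1 : Submodule R K) / JK) ^ (N + N) ≤ 1 / IK := by
        rw [hM]
        exact le_trans (pow_mono_submodule hJIdiv (M + 1)) (pow_succ_le_self hDD M)
      exact le_trans (mul_le_mul' h1 h2) Submodule.mul_one_div_le_one
    have hchain : Submodule.span R {x} *
        (Submodule.span R {algebraMap R K t} * Submodule.span R {algebraMap R K t}) *
        G ^ (N + N) ≤ 1 := by
      calc Submodule.span R {x} *
          (Submodule.span R {algebraMap R K t} * Submodule.span R {algebraMap R K t}) *
          G ^ (N + N)
          ≤ Submodule.span R {x} *
            (Submodule.span R {algebraMap R K t} * Submodule.span R {algebraMap R K t}) *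
            (JK * ((1 : Submodule R K) / JK)) ^ (N + N) :=
            mul_le_mul' le_rfl (pow_mono_submodule hGle (N + N))
        _ = (Submodule.span R {x} * (Submodule.span R {algebraMap R K t} * JK ^ N)) *
            ((Submodule.span R {algebraMap R K t} * JK ^ N) *
              ((1 : Submodule R K) / JK) ^ (N + N)) := by
            rw [mul_pow]
            rw [show N + N = 2 * N by ring, pow_mul]
            ring
        _ ≤ 1 * 1 := mul_le_mul' hA hB
        _ = 1 := one_mul _
    have hxdiv : x * algebraMap R K (t * t) ∈ (1 : Submodule R K) / G ^ (N + N) := by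
      rw [Submodule.mem_div_iff_forall_mul_mem]
      intro g hg
      have hmem : x * (algebraMap R K t * algebraMap R K t) * g ∈
          Submodule.span R {x} *
          (Submodule.span R {algebraMap R K t} * Submodule.span R {algebraMap R K t}) *
          G ^ (N + N) :=
        Submodule.mul_mem_mul
          (Submodule.mul_mem_mul (Submodule.mem_span_singleton_self x)
            (Submodule.mul_mem_mul (Submodule.mem_span_singleton_self _)
              (Submodule.mem_span_singleton_self _))) hg
      have := hchain hmem
      rwa [map_mul]
    obtain ⟨M, hM⟩ : ∃ M, N + N = M + 1 := ⟨N + N - 1, by omega⟩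
    rw [hM] at hxdiv
    have hfin : x * algebraMap R K (t * t) ∈ (1 : Submodule R K) := hGpow M hxdiv
    rwa [mul_comm] at hfin
  -- conclude
  have hFKbot : toK R K F ≠ ⊥ := by
    rw [Submodule.ne_bot_iff]
    exact ⟨algebraMap R K (t * j₀ ^ N), mem_toK.2 ⟨_, hFmem, rfl⟩,
      fun h => hFmemne ((map_eq_zero_iff _ hinj).1 h)⟩
  have hFKfg : (toK R K F).FG := Submodule.FG.map _ hFfg
  have hkey2 : algebraMap R K (t * t) ∈ tOp IK := by
    rw [tOp]
    have hmemS : vOp (toK R K F) ∈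
        {V : Submodule R K | ∃ Jm : Submodule R K, Jm ≠ ⊥ ∧ Jm.FG ∧ Jm ≤ IK ∧ V = vOp Jm} :=
      ⟨toK R K F, hFKbot, hFKfg, hFle, rfl⟩
    exact le_sSup hmemS hkey
  rw [IsTIdeal] at htI
  rw [← hIKdef] at htI
  rw [htI] at hkey2
  obtain ⟨i, hiI, hi⟩ := mem_toK.1 hkey2
  have : i = t * t := hinj hi
  subst this
  have htt : t * t ∈ P := hP.1.2 hiI
  rcases hPprime.mem_or_mem htt with h | h <;> exact htP h


end Statements

end

end PVMDPaper
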